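/- Consider the A₄ singularity lattice: L generated by E₁, E₂, E₃ with (E_i,E_i) = −2 and (E₁,E₂) = (E₂,E₃) = 1, (E₁,E₃) = 0. Let h be the class of −D₂ = (1/2, 1, 1/2) in L'/L. Then \bar{l}'_{ne}(h) = (1/2, 1, 1/2) while l'_e(h) = (1/2, 0, 1/2), so \bar{l}'_{ne}(h) ≠ l'_e(h); nevertheless χ(\bar{l}'_{ne}(h)) = χ(l'_e(h)). -/

import Mathlib

open Matrix

variable {J : Type*}

/-- The rational bilinear (intersection) form associated with the integral matrix `B`. -/
def bform [Fintype J] (B : Matrix J J ℤ) (x y : J → ℚ) : ℚ :=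
  x ⬝ᵥ (B.map (fun n => (n : ℚ))).mulVec y

/-- `B` is negative definite as a rational quadratic form. -/
def NegDef [Fintype J] (B : Matrix J J ℤ) : Prop :=
  ∀ x : J → ℚ, x ≠ 0 → bform B x x < 0

/-- Membership in the lattice `L` (integral coordinates in the basis `E_j`). -/
def isLat (x : J → ℚ) : Prop := ∀ j, ∃ m : ℤ, x j = (m : ℚ)

/-- Membership in the dual lattice `L' ⊂ L ⊗ ℚ`. -/
def isDual [Fintype J] [DecidableEq J] (B : Matrix J J ℤ) (x : J → ℚ) : Prop :=
  ∀ j, ∃ m : ℤ, bform B x (Pi.single j 1) = (m : ℚ)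

/-- Membership in the anti-nef cone `NE_ℚ = {x : (x,E_j) ≥ 0 ∀ j}`. -/
def inNE [Fintype J] [DecidableEq J] (B : Matrix J J ℤ) (x : J → ℚ) : Prop :=
  ∀ j, 0 ≤ bform B x (Pi.single j 1)

/-- Effective rational cycles: all coordinates nonnegative. -/
def Effective (x : J → ℚ) : Prop := ∀ j, 0 ≤ x j

/-- `χ(x) = -(x, x+K)/2` (Riemann–Roch). -/
def chi [Fintype J] (B : Matrix J J ℤ) (K x : J → ℚ) : ℚ := -(bform B x (x + K)) / 2

/-- The intersection matrix of the `A₄` singularity. -/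
def A4 : Matrix (Fin 3) (Fin 3) ℤ := !![-2, 1, 0; 1, -2, 1; 0, 1, -2]

/-- `\bar l'_{ne}(h) = -D₂ = (1/2, 1, 1/2)`. -/
def xbar : Fin 3 → ℚ := ![1/2, 1, 1/2]

/-- `l'_e(h) = (1/2, 0, 1/2)`. -/
def xe : Fin 3 → ℚ := ![1/2, 0, 1/2]


lemma bform_eq (x y : Fin 3 → ℚ) :
    bform A4 x y =
      x 0 * (-2 * y 0 + y 1) + x 1 * (y 0 - 2 * y 1 + y 2) + x 2 * (y 1 - 2 * y 2) := by
  simp [bform, A4, Matrix.mulVec, dotProduct, Fin.sum_univ_three, Matrix.map_apply]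
  ring

lemma single_vals (j : Fin 3) :
    (Pi.single j 1 : Fin 3 → ℚ) 0 = (if j = 0 then 1 else 0) ∧
    (Pi.single j 1 : Fin 3 → ℚ) 1 = (if j = 1 then 1 else 0) ∧
    (Pi.single j 1 : Fin 3 → ℚ) 2 = (if j = 2 then 1 else 0) := by
  fin_cases j <;> simp [Pi.single_apply]

/-- for the `A₄` lattice and the class `h` of `-D₂`, one has
`\bar l'_{ne}(h) = (1/2,1,1/2)`, `l'_e(h) = (1/2,0,1/2)`, these differ, yet
their `χ`-values agree. -/
theorem stmt17 (K : Fin 3 → ℚ)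
    (hK : ∀ j, bform A4 K (Pi.single j 1) = -(A4 j j : ℚ) - 2) :
    -- `xbar = -D₂`, i.e. `(xbar, E_i) = -δ_{2i}`
    (∀ j, bform A4 xbar (Pi.single j 1) = if j = 1 then -1 else 0) ∧
    -- `xe` lies in the same class `h` and in the unit cube `Q`
    isLat (xe - xbar) ∧ (∀ j, 0 ≤ xe j ∧ xe j < 1) ∧
    -- `xbar` is the minimal representative of `h` in `-NE_ℚ`
    inNE A4 (-xbar) ∧
    (∀ z : Fin 3 → ℚ, isLat (z - xbar) → inNE A4 (-z) → xbar ≤ z) ∧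
    -- `xe` is the minimal effective representative of `h`
    Effective xe ∧
    (∀ y : Fin 3 → ℚ, isLat (y - xbar) → Effective y → xe ≤ y) ∧
    -- they differ, yet have equal Euler characteristics
    xbar ≠ xe ∧ chi A4 K xbar = chi A4 K xe := by
  have hK0 := hK 0
  have hK1 := hK 1
  have hK2 := hK 2
  rw [bform_eq] at hK0 hK1 hK2
  simp [A4, (single_vals 0).1, (single_vals 0).2.1, (single_vals 0).2.2,
    (single_vals 1).1, (single_vals 1).2.1, (single_vals 1).2.2,
    (single_vals 2).1, (single_vals 2).2.1, (single_vals 2).2.2] at hK0 hK1 hK2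
  have hK0' : K 0 = 0 := by linarith
  have hK1' : K 1 = 0 := by linarith
  have hK2' : K 2 = 0 := by linarith
  refine ⟨?_, ?_, ?_, ?_, ?_, ?_, ?_, ?_, ?_⟩
  · intro j
    fin_cases j <;>
      · rw [bform_eq]; norm_num [Pi.single_apply, xbar, Fin.ext_iff, Matrix.cons_val_two]
  · intro j
    fin_cases j
    · exact ⟨0, by norm_num [xe, xbar]⟩
    · exact ⟨-1, by norm_num [xe, xbar]⟩
    · exact ⟨0, by norm_num [xe, xbar]⟩
  · intro j; fin_cases j <;> norm_num [xe]
  · intro j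
    fin_cases j <;>
      · rw [bform_eq]; norm_num [Pi.single_apply, xbar, Fin.ext_iff, Matrix.cons_val_two]
  · intro z hlat hne
    obtain ⟨m0, hm0⟩ := hlat 0
    obtain ⟨m1, hm1⟩ := hlat 1
    obtain ⟨m2, hm2⟩ := hlat 2
    simp [xbar] at hm0 hm1 hm2
    have e0 : z 0 = 1/2 + (m0 : ℚ) := by linarith
    have e1 : z 1 = 1 + (m1 : ℚ) := by linarith
    have e2 : z 2 = 1/2 + (m2 : ℚ) := by linarith
    have i0 := hne 0
    have i1 := hne 1
    have i2 := hne 2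
    rw [bform_eq] at i0 i1 i2
    obtain ⟨h00, h01, h02⟩ := single_vals (0 : Fin 3)
    obtain ⟨h10, h11, h12⟩ := single_vals (1 : Fin 3)
    obtain ⟨h20, h21, h22⟩ := single_vals (2 : Fin 3)
    rw [h00, h01, h02] at i0
    rw [h10, h11, h12] at i1
    rw [h20, h21, h22] at i2
    simp [e0, e1, e2] at i0 i1 i2
    have j0 : (m1 : ℚ) ≤ 2 * m0 := by linarith
    have j1 : (m0 : ℚ) + m2 ≤ 2 * m1 + 1 := by linarith
    have j2 : (m1 : ℚ) ≤ 2 * m2 := by linarith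
    have k0 : m1 ≤ 2 * m0 := by exact_mod_cast j0
    have k1 : m0 + m2 ≤ 2 * m1 + 1 := by exact_mod_cast j1
    have k2 : m1 ≤ 2 * m2 := by exact_mod_cast j2
    have n0 : 0 ≤ m0 := by omega
    have n1 : 0 ≤ m1 := by omega
    have n2 : 0 ≤ m2 := by omega
    intro j
    fin_cases j
    · simp [e0, xbar]; positivity
    · simp [e1, xbar]; positivity
    · simp [e2, xbar]; positivity
  · intro j; fin_cases j <;> norm_num [xe]
  · intro y hlat heff
    obtain ⟨m0, hm0⟩ := hlat 0
    obtain ⟨m1, hm1⟩ := hlat 1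
    obtain ⟨m2, hm2⟩ := hlat 2
    simp [xbar] at hm0 hm1 hm2
    have e0 : y 0 = 1/2 + (m0 : ℚ) := by linarith
    have e1 : y 1 = 1 + (m1 : ℚ) := by linarith
    have e2 : y 2 = 1/2 + (m2 : ℚ) := by linarith
    have i0 := heff 0
    have i1 := heff 1
    have i2 := heff 2
    rw [e0] at i0; rw [e1] at i1; rw [e2] at i2
    have n0 : (0:ℤ) ≤ m0 := by
      have : (-1 : ℚ)/2 ≤ (m0 : ℚ) := by linarith
      have : (-1 : ℤ) < m0 := by exact_mod_cast (by linarith : (-1 : ℚ) < m0)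
      omega
    have n2 : (0:ℤ) ≤ m2 := by
      have : (-1 : ℤ) < m2 := by exact_mod_cast (by linarith : (-1 : ℚ) < m2)
      omega
    have q0 : (0:ℚ) ≤ m0 := by exact_mod_cast n0
    have q2 : (0:ℚ) ≤ m2 := by exact_mod_cast n2
    intro j
    fin_cases j
    · simp [e0, xe]; linarith
    · simp [e1, xe]; linarith
    · simp [e2, xe]; linarith
  · intro h
    have := congrFun h 1
    norm_num [xbar, xe] at this
  · unfold chi
    rw [bform_eq, bform_eq]
    simp [xbar, xe, hK0', hK1', hK2']
    norm_num
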